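/- Let a₁, a₂ ∈ [0,∞), b₂₁ ∈ (−∞,0], b₁₁, b₂₂, θ ∈ (0,∞), m, κ₁, κ₂ ∈ ℝ and y₁, y₂ ∈ [0,∞), x₀ ∈ ℝ. Then the function e₃ converges at infinity, namely e₃(t) → (1/θ)·( m − κ₁·a₁/b₁₁ − κ₂·( a₂/b₂₂ − b₂₁·a₁/(b₁₁·b₂₂) ) ) as t → ∞. (This is the subcritical-case behavior of E(X_t) in Proposition 3.1.) -/

import Mathlib

open MeasureTheory Filter Real

lemma int_exp_aff (c d t : ℝ) (hd : d ≠ 0) :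
    ∫ s in (0:ℝ)..t, Real.exp (c + d*s) = (Real.exp (c + d*t) - Real.exp c)/d := by
  have hder : ∀ s ∈ Set.uIcc (0:ℝ) t,
      HasDerivAt (fun s => Real.exp (c + d*s)/d) (Real.exp (c + d*s)) s := by
    intro s _
    have h1 : HasDerivAt (fun s : ℝ => c + d*s) d s := by
      simpa using ((hasDerivAt_id s).const_mul d).const_add c
    have h2 := (h1.exp).div_const d
    simpa [mul_div_assoc, mul_div_cancel_right₀, hd] using h2
  rw [intervalIntegral.integral_eq_sub_of_hasDerivAt hder
    ((Real.continuous_exp.comp (by continuity)).intervalIntegrable 0 t)]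
  simp [div_sub_div_same]

lemma int_exp_neg (b t : ℝ) (hb : b ≠ 0) :
    ∫ u in (0:ℝ)..t, Real.exp (-b*u) = (1 - Real.exp (-b*t))/b := by
  have h : (fun u : ℝ => Real.exp (-b*u)) = fun u => Real.exp (0 + (-b)*u) := by
    funext u; ring_nf
  rw [h, int_exp_aff 0 (-b) t (neg_ne_zero.2 hb), zero_add, Real.exp_zero, div_neg, ← neg_div]
  ring

lemma conv_rw (lam t : ℝ) (f : ℝ → ℝ) :
    ∫ s in (0:ℝ)..t, Real.exp (-lam*(t-s)) * f s
      = Real.exp (-lam*t) * ∫ s in (0:ℝ)..t, Real.exp (lam*s) * f s := by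
  rw [← intervalIntegral.integral_const_mul]
  apply intervalIntegral.integral_congr
  intro s _
  simp only [← mul_assoc, ← Real.exp_add]
  ring_nf

lemma conv_cont (lam : ℝ) (f : ℝ → ℝ) (hf : Continuous f) :
    Continuous (fun t => ∫ s in (0:ℝ)..t, Real.exp (-lam*(t-s)) * f s) := by
  have h : (fun t => ∫ s in (0:ℝ)..t, Real.exp (-lam*(t-s)) * f s)
      = fun t => Real.exp (-lam*t) * ∫ s in (0:ℝ)..t, Real.exp (lam*s) * f s :=
    funext fun t => conv_rw lam t f
  rw [h]
  exact (Real.continuous_exp.comp (by continuity)).mul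
    (intervalIntegral.continuous_primitive
      (fun a b => (((Real.continuous_exp.comp (by continuity)).mul hf).intervalIntegrable a b)) 0)

lemma conv_const_eval (lam c t : ℝ) (hlam : lam ≠ 0) :
    ∫ s in (0:ℝ)..t, Real.exp (-lam*(t-s)) * c = c * ((1 - Real.exp (-lam*t))/lam) := by
  have h : Set.EqOn (fun s : ℝ => Real.exp (-lam*(t-s)) * c)
      (fun s : ℝ => c * Real.exp ((-lam*t) + lam*s)) (Set.uIcc 0 t) := by
    intro s _
    simp only [mul_comm, ← Real.exp_add]
    ring_nf
  rw [intervalIntegral.integral_congr h, intervalIntegral.integral_const_mul,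
    int_exp_aff _ _ _ hlam]
  have : -lam*t + lam*t = 0 := by ring
  rw [this, Real.exp_zero]

lemma exp_neg_tendsto {nu : ℝ} (hnu : 0 < nu) :
    Tendsto (fun t : ℝ => Real.exp (-nu*t)) atTop (nhds 0) := by
  have h1 : Tendsto (fun t : ℝ => -nu*t) atTop atBot := by
    apply Tendsto.const_mul_atTop_of_neg (neg_neg_iff_pos.2 hnu)
    exact tendsto_id
  exact Real.tendsto_exp_atBot.comp h1

lemma conv_bound {lam nu K : ℝ} (hnu : 0 < nu) (hnl : nu < lam) (hK : 0 ≤ K)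
    {t : ℝ} (ht : 0 ≤ t) (f : ℝ → ℝ) (hf : Continuous f)
    (hb : ∀ s, 0 ≤ s → |f s| ≤ K * Real.exp (-nu*s)) :
    |∫ s in (0:ℝ)..t, Real.exp (-lam*(t-s)) * f s| ≤ K/(lam-nu) * Real.exp (-nu*t) := by
  have hdl : (0:ℝ) < lam - nu := sub_pos.2 hnl
  have h1 : |∫ s in (0:ℝ)..t, Real.exp (-lam*(t-s)) * f s|
      ≤ ∫ s in (0:ℝ)..t, |Real.exp (-lam*(t-s)) * f s| :=
    intervalIntegral.abs_integral_le_integral_abs ht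
  have h2 : ∫ s in (0:ℝ)..t, |Real.exp (-lam*(t-s)) * f s|
      ≤ ∫ s in (0:ℝ)..t, K * Real.exp ((-lam*t) + (lam-nu)*s) := by
    apply intervalIntegral.integral_mono_on ht
    · exact (((Real.continuous_exp.comp (by continuity)).mul hf).abs).intervalIntegrable 0 t
    · exact (continuous_const.mul (Real.continuous_exp.comp (by continuity : Continuous fun s : ℝ => (-lam*t) + (lam-nu)*s))).intervalIntegrable 0 t
    · intro s hs
      rw [abs_mul, abs_of_pos (Real.exp_pos _)]
      have h3 : Real.exp (-lam*(t-s)) * |f s| ≤ Real.exp (-lam*(t-s)) * (K * Real.exp (-nu*s)) :=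
        mul_le_mul_of_nonneg_left (hb s hs.1) (Real.exp_pos _).le
      refine h3.trans_eq ?_
      rw [← mul_assoc, mul_comm (Real.exp (-lam*(t-s))) K, mul_assoc, ← Real.exp_add]
      ring_nf
  have h4 : ∫ s in (0:ℝ)..t, K * Real.exp ((-lam*t) + (lam-nu)*s)
      = K * ((Real.exp ((-lam*t) + (lam-nu)*t) - Real.exp (-lam*t))/(lam-nu)) := by
    rw [intervalIntegral.integral_const_mul, int_exp_aff _ _ _ (ne_of_gt hdl)]
  have h5 : -lam*t + (lam-nu)*t = -nu*t := by ring
  rw [h4, h5] at h2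
  have h6 : K * ((Real.exp (-nu*t) - Real.exp (-lam*t))/(lam-nu))
      ≤ K/(lam-nu) * Real.exp (-nu*t) := by
    rw [div_mul_eq_mul_div, mul_div_assoc]
    apply mul_le_mul_of_nonneg_left _ hK
    apply div_le_div_of_nonneg_right _ hdl.le
    nlinarith [Real.exp_pos (-lam*t)]
  linarith

lemma conv_tendsto_zero {lam nu K : ℝ} (hnu : 0 < nu) (hnl : nu < lam) (hK : 0 ≤ K)
    (f : ℝ → ℝ) (hf : Continuous f)
    (hb : ∀ s, 0 ≤ s → |f s| ≤ K * Real.exp (-nu*s)) :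
    Tendsto (fun t => ∫ s in (0:ℝ)..t, Real.exp (-lam*(t-s)) * f s) atTop (nhds 0) := by
  apply squeeze_zero_norm' (a := fun t => K/(lam-nu) * Real.exp (-nu*t))
  · filter_upwards [eventually_ge_atTop (0:ℝ)] with t ht
    simpa [Real.norm_eq_abs] using conv_bound hnu hnl hK ht f hf hb
  · simpa using (exp_neg_tendsto hnu).const_mul (K/(lam-nu))

theorem doubleHeston_subcritical_mean_X
    (a1 a2 b21 b11 b22 θ m κ1 κ2 y1 y2 x0 : ℝ)
    (ha1 : 0 ≤ a1) (ha2 : 0 ≤ a2) (hb21 : b21 ≤ 0)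
    (hb11 : 0 < b11) (hb22 : 0 < b22) (hθ : 0 < θ)
    (hy1 : 0 ≤ y1) (hy2 : 0 ≤ y2)
    (e1 e2 e3 : ℝ → ℝ)
    (he1 : ∀ t, 0 ≤ t →
      e1 t = y1 * Real.exp (-b11 * t) + a1 * ∫ u in (0:ℝ)..t, Real.exp (-b11 * u))
    (he2 : ∀ t, 0 ≤ t →
      e2 t = y2 * Real.exp (-b22 * t) + a2 * (∫ u in (0:ℝ)..t, Real.exp (-b22 * u))
        - b21 * ∫ s in (0:ℝ)..t, Real.exp (-b22 * (t - s)) * e1 s)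
    (he3 : ∀ t, 0 ≤ t →
      e3 t = x0 * Real.exp (-θ * t) + m * (∫ u in (0:ℝ)..t, Real.exp (-θ * u))
        - κ1 * (∫ s in (0:ℝ)..t, Real.exp (-θ * (t - s)) * e1 s)
        - κ2 * ∫ s in (0:ℝ)..t, Real.exp (-θ * (t - s)) * e2 s) :
    Tendsto e3 atTop
      (nhds ((1 / θ) * (m - κ1 * a1 / b11 - κ2 * (a2 / b22 - b21 * a1 / (b11 * b22))))) := by
  have hce : ∀ lam t : ℝ, Continuous fun s : ℝ => Real.exp (-lam*(t-s)) :=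
    fun lam t => Real.continuous_exp.comp (continuous_const.mul (continuous_const.sub continuous_id))
  set nu : ℝ := min b11 (min b22 θ) / 2 with hnu_def
  have hnu : 0 < nu := by positivity
  have hnu11 : nu < b11 := by
    have := min_le_left b11 (min b22 θ); simp only [hnu_def]; nlinarith [lt_min hb22 hθ]
  have hnu22 : nu < b22 := by
    have h := (min_le_right b11 (min b22 θ)).trans (min_le_left b22 θ)
    simp only [hnu_def]; nlinarith
  have hnuθ : nu < θ := by
    have h := (min_le_right b11 (min b22 θ)).trans (min_le_right b22 θ)
    simp only [hnu_def]; nlinarith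
  set r1 : ℝ → ℝ := fun t => (y1 - a1/b11) * Real.exp (-b11*t) with hr1_def
  have hr1c : Continuous r1 := continuous_const.mul (Real.continuous_exp.comp (by continuity))
  set K1 : ℝ := |y1 - a1/b11| with hK1_def
  have hK1 : 0 ≤ K1 := abs_nonneg _
  have hr1b : ∀ s, 0 ≤ s → |r1 s| ≤ K1 * Real.exp (-nu*s) := by
    intro s hs
    rw [hr1_def]
    simp only [abs_mul, Real.abs_exp]
    apply mul_le_mul_of_nonneg_left _ hK1
    apply Real.exp_le_exp.2
    have := mul_le_mul_of_nonneg_right hnu11.le hs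
    linarith
  have he1' : ∀ s, 0 ≤ s → e1 s = a1/b11 + r1 s := by
    intro s hs
    rw [he1 s hs, int_exp_neg b11 s (ne_of_gt hb11), hr1_def]
    field_simp
    ring
  -- convolution against e1
  have hconv1 : ∀ lam : ℝ, lam ≠ 0 → ∀ t : ℝ, 0 ≤ t →
      ∫ s in (0:ℝ)..t, Real.exp (-lam*(t-s)) * e1 s
        = (a1/b11) * ((1 - Real.exp (-lam*t))/lam)
          + ∫ s in (0:ℝ)..t, Real.exp (-lam*(t-s)) * r1 s := by
    intro lam hlam t ht
    have hcongr : Set.EqOn (fun s : ℝ => Real.exp (-lam*(t-s)) * e1 s)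
        (fun s : ℝ => Real.exp (-lam*(t-s)) * (a1/b11) + Real.exp (-lam*(t-s)) * r1 s)
        (Set.uIcc 0 t) := by
      intro s hs
      rw [Set.uIcc_of_le ht] at hs
      simp only
      rw [he1' s hs.1]
      ring
    rw [intervalIntegral.integral_congr hcongr, intervalIntegral.integral_add (f := fun s : ℝ => Real.exp (-lam*(t-s)) * (a1/b11)) (g := fun s : ℝ => Real.exp (-lam*(t-s)) * r1 s)
      (((hce lam t).mul continuous_const).intervalIntegrable 0 t)
      (((hce lam t).mul hr1c).intervalIntegrable 0 t)
      , conv_const_eval lam (a1/b11) t hlam]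
  set A2 : ℝ := a2/b22 - b21*a1/(b11*b22) with hA2_def
  set r2 : ℝ → ℝ := fun t => (y2 - a2/b22 + b21*a1/(b11*b22)) * Real.exp (-b22*t)
      - b21 * ∫ s in (0:ℝ)..t, Real.exp (-b22*(t-s)) * r1 s with hr2_def
  have hr2c : Continuous r2 := (continuous_const.mul
      (Real.continuous_exp.comp (by continuity))).sub
      (continuous_const.mul (conv_cont b22 r1 hr1c))
  have he2' : ∀ t, 0 ≤ t → e2 t = A2 + r2 t := by
    intro t ht
    have h1 : (-b22) * t = -b22 * t := by ring
    rw [he2 t ht, int_exp_neg b22 t (ne_of_gt hb22)]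
    have h2 := hconv1 b22 (ne_of_gt hb22) t ht
    have h3 : ∀ s : ℝ, -b22 * (t - s) = -b22*(t-s) := fun s => rfl
    rw [show (∫ s in (0:ℝ)..t, Real.exp (-b22 * (t - s)) * e1 s)
        = (a1/b11) * ((1 - Real.exp (-b22*t))/b22)
          + ∫ s in (0:ℝ)..t, Real.exp (-b22*(t-s)) * r1 s from h2]
    rw [hr2_def, hA2_def]
    simp only
    field_simp
    ring
  set K2 : ℝ := |y2 - a2/b22 + b21*a1/(b11*b22)| + |b21| * (K1/(b22-nu)) with hK2_def
  have hK2 : 0 ≤ K2 :=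
    add_nonneg (abs_nonneg _) (mul_nonneg (abs_nonneg _) (div_nonneg hK1 (by linarith)))
  have hr2b : ∀ t, 0 ≤ t → |r2 t| ≤ K2 * Real.exp (-nu*t) := by
    intro t ht
    have h1 := conv_bound hnu hnu22 hK1 ht r1 hr1c hr1b
    have h2 : Real.exp (-b22*t) ≤ Real.exp (-nu*t) := by
      apply Real.exp_le_exp.2
      have := mul_le_mul_of_nonneg_right hnu22.le ht
      linarith
    rw [hr2_def]
    simp only
    calc |(y2 - a2/b22 + b21*a1/(b11*b22)) * Real.exp (-b22*t)
          - b21 * ∫ s in (0:ℝ)..t, Real.exp (-b22*(t-s)) * r1 s|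
        ≤ |(y2 - a2/b22 + b21*a1/(b11*b22)) * Real.exp (-b22*t)|
          + |b21 * ∫ s in (0:ℝ)..t, Real.exp (-b22*(t-s)) * r1 s| := abs_sub _ _
      _ ≤ |y2 - a2/b22 + b21*a1/(b11*b22)| * Real.exp (-nu*t)
            + |b21| * (K1/(b22-nu) * Real.exp (-nu*t)) := by
          rw [abs_mul, abs_mul, Real.abs_exp]
          exact add_le_add (mul_le_mul_of_nonneg_left h2 (abs_nonneg _))
            (mul_le_mul_of_nonneg_left h1 (abs_nonneg _))
      _ = K2 * Real.exp (-nu*t) := by rw [hK2_def]; ring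
  -- convolution against e2
  have hconv2 : ∀ t : ℝ, 0 ≤ t →
      ∫ s in (0:ℝ)..t, Real.exp (-θ*(t-s)) * e2 s
        = A2 * ((1 - Real.exp (-θ*t))/θ)
          + ∫ s in (0:ℝ)..t, Real.exp (-θ*(t-s)) * r2 s := by
    intro t ht
    have hcongr : Set.EqOn (fun s : ℝ => Real.exp (-θ*(t-s)) * e2 s)
        (fun s : ℝ => Real.exp (-θ*(t-s)) * A2 + Real.exp (-θ*(t-s)) * r2 s)
        (Set.uIcc 0 t) := by
      intro s hs
      rw [Set.uIcc_of_le ht] at hs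
      simp only
      rw [he2' s hs.1]
      ring
    rw [intervalIntegral.integral_congr hcongr, intervalIntegral.integral_add (f := fun s : ℝ => Real.exp (-θ*(t-s)) * A2) (g := fun s : ℝ => Real.exp (-θ*(t-s)) * r2 s)
      (((hce θ t).mul continuous_const).intervalIntegrable 0 t)
      (((hce θ t).mul hr2c).intervalIntegrable 0 t)
      , conv_const_eval θ A2 t (ne_of_gt hθ)]
  -- explicit form of e3 for t ≥ 0
  have he3' : ∀ t, 0 ≤ t →
      e3 t = x0 * Real.exp (-θ*t) + m * ((1 - Real.exp (-θ*t))/θ)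
        - κ1 * ((a1/b11) * ((1 - Real.exp (-θ*t))/θ)
            + ∫ s in (0:ℝ)..t, Real.exp (-θ*(t-s)) * r1 s)
        - κ2 * (A2 * ((1 - Real.exp (-θ*t))/θ)
            + ∫ s in (0:ℝ)..t, Real.exp (-θ*(t-s)) * r2 s) := by
    intro t ht
    rw [he3 t ht, int_exp_neg θ t (ne_of_gt hθ), ← hconv1 θ (ne_of_gt hθ) t ht, ← hconv2 t ht]
  -- limits
  have hE : Tendsto (fun t : ℝ => Real.exp (-θ*t)) atTop (nhds 0) := exp_neg_tendsto hθ
  have hC1 : Tendsto (fun t => ∫ s in (0:ℝ)..t, Real.exp (-θ*(t-s)) * r1 s) atTop (nhds 0) :=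
    conv_tendsto_zero hnu hnuθ hK1 r1 hr1c hr1b
  have hC2 : Tendsto (fun t => ∫ s in (0:ℝ)..t, Real.exp (-θ*(t-s)) * r2 s) atTop (nhds 0) :=
    conv_tendsto_zero hnu hnuθ hK2 r2 hr2c hr2b
  have hmain : Tendsto (fun t : ℝ =>
      x0 * Real.exp (-θ*t) + m * ((1 - Real.exp (-θ*t))/θ)
        - κ1 * ((a1/b11) * ((1 - Real.exp (-θ*t))/θ)
            + ∫ s in (0:ℝ)..t, Real.exp (-θ*(t-s)) * r1 s)
        - κ2 * (A2 * ((1 - Real.exp (-θ*t))/θ)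
            + ∫ s in (0:ℝ)..t, Real.exp (-θ*(t-s)) * r2 s)) atTop
      (nhds (x0 * 0 + m * ((1 - 0)/θ)
        - κ1 * ((a1/b11) * ((1 - 0)/θ) + 0) - κ2 * (A2 * ((1 - 0)/θ) + 0))) := by
    apply Tendsto.sub
    apply Tendsto.sub
    · exact (hE.const_mul x0).add
        ((((tendsto_const_nhds.sub hE).div_const θ).const_mul m))
    · exact ((((tendsto_const_nhds.sub hE).div_const θ).const_mul (a1/b11)).add hC1).const_mul κ1
    · exact ((((tendsto_const_nhds.sub hE).div_const θ).const_mul A2).add hC2).const_mul κ2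
  have heq : (x0 * 0 + m * ((1 - 0)/θ)
        - κ1 * ((a1/b11) * ((1 - 0)/θ) + 0) - κ2 * (A2 * ((1 - 0)/θ) + 0))
      = (1 / θ) * (m - κ1 * a1 / b11 - κ2 * (a2 / b22 - b21 * a1 / (b11 * b22))) := by
    rw [hA2_def]
    ring
  rw [heq] at hmain
  apply hmain.congr'
  filter_upwards [eventually_ge_atTop (0:ℝ)] with t ht
  exact (he3' t ht).symm
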